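/- The real number ℙ₀ = ∏_{k≥2} ((1 - 2^{-k}) ζ(k))^{-1} satisfies 0.75 < ℙ₀ < 0.76. -/

import Mathlib

/-- The Riemann zeta function at a natural number `k ≥ 2`, as a real number. -/
noncomputable def zetaReal (k : ℕ) : ℝ := ∑' n : ℕ, (((n : ℝ) + 1) ^ k)⁻¹

open Finset Real Filter

lemma summable_zeta {m : ℕ} (hm : 2 ≤ m) :
    Summable (fun n : ℕ => (((n : ℝ) + 1) ^ m)⁻¹) := by
  have h : Summable (fun n : ℕ => ((n : ℝ) ^ m)⁻¹) := by
    simpa [one_div] using summable_one_div_nat_pow.mpr (by omega : 1 < m)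
  have h2 := (summable_nat_add_iff 1).mpr h
  refine h2.congr fun n => ?_
  push_cast
  ring_nf

lemma hasSum_teles (N : ℕ) (hN : 0 < N) :
    HasSum (fun n : ℕ => (((n : ℝ) + N) * ((n : ℝ) + N + 1))⁻¹) (N : ℝ)⁻¹ := by
  have hNpos : (0 : ℝ) < N := by exact_mod_cast hN
  have hpos : ∀ n : ℕ, (0 : ℝ) < (n : ℝ) + N := fun n => by
    have : (0:ℝ) ≤ (n:ℝ) := Nat.cast_nonneg n
    linarith
  have hnonneg : ∀ n : ℕ, 0 ≤ (((n : ℝ) + N) * ((n : ℝ) + N + 1))⁻¹ := fun n => by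
    have h1 := hpos n
    positivity
  rw [hasSum_iff_tendsto_nat_of_nonneg hnonneg]
  have hkey : ∀ n : ℕ, (∑ i ∈ Finset.range n, (((i : ℝ) + N) * ((i : ℝ) + N + 1))⁻¹)
      = ((0 : ℝ) + N)⁻¹ - ((n : ℝ) + N)⁻¹ := by
    intro n
    have : ∀ i : ℕ, (((i : ℝ) + N) * ((i : ℝ) + N + 1))⁻¹
        = ((i : ℝ) + N)⁻¹ - (((i + 1 : ℕ) : ℝ) + N)⁻¹ := by
      intro i
      have h1 := hpos i
      have h2 : (0:ℝ) < (i : ℝ) + N + 1 := by linarith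
      push_cast
      rw [show (i:ℝ) + 1 + (N:ℝ) = (i:ℝ) + (N:ℝ) + 1 by ring]
      rw [inv_sub_inv h1.ne' h2.ne',
        show (i:ℝ) + N + 1 - ((i:ℝ) + N) = 1 by ring, one_div]
    calc (∑ i ∈ Finset.range n, (((i : ℝ) + N) * ((i : ℝ) + N + 1))⁻¹)
        = ∑ i ∈ Finset.range n, ((((i : ℕ) : ℝ) + N)⁻¹ - (((i + 1 : ℕ) : ℝ) + N)⁻¹) := by
          exact Finset.sum_congr rfl fun i _ => this i
      _ = (((0 : ℕ) : ℝ) + N)⁻¹ - (((n : ℕ) : ℝ) + N)⁻¹ :=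
          Finset.sum_range_sub' (fun i : ℕ => (((i : ℕ) : ℝ) + N)⁻¹) n
      _ = ((0 : ℝ) + N)⁻¹ - ((n : ℝ) + N)⁻¹ := by norm_num
  simp only [hkey]
  have htend : Tendsto (fun n : ℕ => ((n : ℝ) + N)⁻¹) atTop (nhds 0) := by
    have : Tendsto (fun n : ℕ => (n : ℝ) + N) atTop atTop :=
      tendsto_atTop_add_const_right _ _ tendsto_natCast_atTop_atTop
    exact this.inv_tendsto_atTop
  have := (tendsto_const_nhds (x := ((0:ℝ) + N)⁻¹) (f := atTop (α := ℕ))).sub htend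
  simpa using this

lemma zeta_lower (m N : ℕ) (hm : 2 ≤ m) :
    (∑ n ∈ Finset.range N, (((n : ℝ) + 1) ^ m)⁻¹) ≤ zetaReal m :=
  Summable.sum_le_tsum _ (fun i _ => by positivity) (summable_zeta hm)

lemma zeta_upper (m N : ℕ) (hm : 2 ≤ m) (hN : 0 < N) :
    zetaReal m ≤ (∑ n ∈ Finset.range N, (((n : ℝ) + 1) ^ m)⁻¹)
      + (((N : ℝ) + 1) ^ (m - 2))⁻¹ * (N : ℝ)⁻¹ := by
  have hsum := summable_zeta hm
  have hNpos : (0 : ℝ) < N := by exact_mod_cast hN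
  rw [zetaReal, ← Summable.sum_add_tsum_nat_add N hsum]
  refine add_le_add_right ?_ _
  have hts := (hasSum_teles N hN).mul_left (((N : ℝ) + 1) ^ (m - 2))⁻¹
  rw [← hts.tsum_eq]
  refine Summable.tsum_le_tsum ?_ ((summable_nat_add_iff N).mpr hsum) hts.summable
  intro n
  have hx : (0 : ℝ) < (n : ℝ) + N := by
    have : (0:ℝ) ≤ (n:ℝ) := Nat.cast_nonneg n
    linarith
  have hcast : (((n + N : ℕ) : ℝ) + 1) = (n : ℝ) + N + 1 := by push_cast; ring
  rw [hcast, ← mul_inv]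
  refine inv_anti₀ (by positivity) ?_
  have hm' : m - 2 + 2 = m := Nat.sub_add_cancel hm
  calc ((N : ℝ) + 1) ^ (m - 2) * (((n : ℝ) + N) * ((n : ℝ) + N + 1))
      ≤ ((n : ℝ) + N + 1) ^ (m - 2) * (((n : ℝ) + N + 1) * ((n : ℝ) + N + 1)) := by
        refine mul_le_mul (pow_le_pow_left₀ (by positivity) (by
          have : (0:ℝ) ≤ (n:ℝ) := Nat.cast_nonneg n
          linarith) _) ?_ (by positivity) (by positivity)
        nlinarith
    _ = ((n : ℝ) + N + 1) ^ (m - 2) * ((n : ℝ) + N + 1) ^ 2 := by ring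
    _ = ((n : ℝ) + N + 1) ^ m := by rw [← pow_add, hm']

set_option maxHeartbeats 1000000 in
lemma zeta2_lower (N : ℕ) :
    (∑ n ∈ Finset.range N, (((n : ℝ) + 1) ^ 2)⁻¹) + ((N : ℝ) + 1)⁻¹ ≤ zetaReal 2 := by
  have hsum := summable_zeta (le_refl 2)
  rw [zetaReal, ← Summable.sum_add_tsum_nat_add N hsum]
  refine add_le_add_right ?_ _
  have hts := hasSum_teles (N + 1) (Nat.succ_pos N)
  have hcast : ((N + 1 : ℕ) : ℝ) = (N : ℝ) + 1 := by push_cast; ring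
  rw [← hcast, ← hts.tsum_eq]
  refine Summable.tsum_le_tsum ?_ hts.summable ((summable_nat_add_iff N).mpr hsum)
  intro n
  have hx : (0 : ℝ) < (n : ℝ) + N + 1 := by
    have : (0:ℝ) ≤ (n:ℝ) := Nat.cast_nonneg n
    have : (0:ℝ) ≤ (N:ℝ) := Nat.cast_nonneg N
    linarith [Nat.cast_nonneg (α := ℝ) n]
  refine inv_anti₀ (by positivity) ?_
  have hcast2 : (((n + N : ℕ) : ℝ) + 1) = (n : ℝ) + N + 1 := by push_cast; ring
  rw [hcast2, hcast]
  nlinarith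

/-- The factor `(1 - 2^{-(k+2)}) ζ(k+2)`. -/
noncomputable def bFun (k : ℕ) : ℝ := (1 - ((2 : ℝ) ^ (k + 2))⁻¹) * zetaReal (k + 2)

lemma one_le_bFun (k : ℕ) : 1 ≤ bFun k := by
  have hz : (1 : ℝ) + ((2 : ℝ) ^ (k + 2))⁻¹ + ((3 : ℝ) ^ (k + 2))⁻¹ ≤ zetaReal (k + 2) := by
    have h := zeta_lower (k + 2) 3 (by omega)
    have e : (∑ n ∈ Finset.range 3, (((n : ℝ) + 1) ^ (k + 2))⁻¹)
        = 1 + ((2 : ℝ) ^ (k + 2))⁻¹ + ((3 : ℝ) ^ (k + 2))⁻¹ := by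
      simp [Finset.sum_range_succ]
      norm_num
    linarith [e ▸ h]
  set x := ((2 : ℝ) ^ (k + 2))⁻¹ with hxdef
  set y := ((3 : ℝ) ^ (k + 2))⁻¹ with hydef
  have hxpos : 0 < x := by positivity
  have hypos : 0 < y := by positivity
  have hx4 : x ≤ 1 / 4 := by
    rw [hxdef]
    rw [show (1 / 4 : ℝ) = ((2 : ℝ) ^ 2)⁻¹ by norm_num]
    exact inv_anti₀ (by norm_num) (pow_le_pow_right₀ (by norm_num) (by omega))
  have hxx : x * x = ((4 : ℝ) ^ (k + 2))⁻¹ := by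
    rw [hxdef, ← mul_inv, ← mul_pow]; norm_num
  have hfrac : ((4 : ℝ) ^ (k + 2))⁻¹ ≤ 3 / 4 * y := by
    rw [hydef, inv_eq_one_div, inv_eq_one_div, mul_one_div, div_div,
      div_le_div_iff₀ (by positivity) (by positivity)]
    rw [pow_add, pow_add]
    have h34 : (3 : ℝ) ^ k ≤ (4 : ℝ) ^ k :=
      pow_le_pow_left₀ (by norm_num) (by norm_num) k
    have h3pos : (0 : ℝ) < (3 : ℝ) ^ k := by positivity
    nlinarith
  have hb : (1 - x) * ((1 : ℝ) + x + y) ≤ bFun k := by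
    rw [bFun]
    have h1x : (0 : ℝ) ≤ 1 - x := by linarith
    exact mul_le_mul_of_nonneg_left hz h1x
  nlinarith

lemma bFun_le (k : ℕ) : bFun k ≤ 1 + 9 / 2 * ((3 : ℝ) ^ (k + 2))⁻¹ := by
  have h := zeta_upper (k + 2) 2 (by omega) (by norm_num)
  have e : (∑ n ∈ Finset.range 2, (((n : ℝ) + 1) ^ (k + 2))⁻¹)
      = 1 + ((2 : ℝ) ^ (k + 2))⁻¹ := by
    simp [Finset.sum_range_succ]
    norm_num
  rw [e] at h
  have e2 : (((2 : ℕ) : ℝ) + 1) ^ (k + 2 - 2) = (3 : ℝ) ^ k := by norm_num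
  rw [e2] at h
  have e3 : ((3 : ℝ) ^ k)⁻¹ * ((2 : ℕ) : ℝ)⁻¹ = 9 / 2 * ((3 : ℝ) ^ (k + 2))⁻¹ := by
    rw [pow_add]
    push_cast
    have : (0:ℝ) < 3 ^ k := by positivity
    field_simp
    ring
  rw [e3] at h
  set x := ((2 : ℝ) ^ (k + 2))⁻¹ with hxdef
  set T := 9 / 2 * ((3 : ℝ) ^ (k + 2))⁻¹ with hTdef
  have hxpos : 0 < x := by positivity
  have hx1 : x ≤ 1 := by
    rw [hxdef]
    refine inv_le_one_of_one_le₀ ?_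
    calc (1:ℝ) = 1 ^ (k + 2) := (one_pow _).symm
      _ ≤ 2 ^ (k + 2) := pow_le_pow_left₀ (by norm_num) (by norm_num) _
  have hTpos : 0 ≤ T := by positivity
  have hb : bFun k ≤ (1 - x) * (1 + x + T) := by
    rw [bFun]
    exact mul_le_mul_of_nonneg_left h (by linarith)
  nlinarith

lemma bFun_pos (k : ℕ) : 0 < bFun k := lt_of_lt_of_le one_pos (one_le_bFun k)

lemma log_bFun_nonneg (k : ℕ) : 0 ≤ Real.log (bFun k) := Real.log_nonneg (one_le_bFun k)

lemma log_bFun_le (k : ℕ) : Real.log (bFun k) ≤ 9 / 2 * ((3 : ℝ) ^ (k + 2))⁻¹ := by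
  have := Real.log_le_sub_one_of_pos (bFun_pos k)
  have h2 := bFun_le k
  linarith

lemma geom_aux (k : ℕ) : 9 / 2 * ((3 : ℝ) ^ (k + 2))⁻¹ = 1 / 2 * (1 / 3 : ℝ) ^ k := by
  rw [pow_add, div_pow]
  have : (0:ℝ) < 3 ^ k := by positivity
  field_simp
  ring

lemma summable_log_bFun : Summable (fun k : ℕ => Real.log (bFun k)) := by
  have hg : Summable (fun k : ℕ => 9 / 2 * ((3 : ℝ) ^ (k + 2))⁻¹) := by
    have := (summable_geometric_of_lt_one (by norm_num : (0:ℝ) ≤ 1/3)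
      (by norm_num : (1/3 : ℝ) < 1)).mul_left (1 / 2 : ℝ)
    exact this.congr fun k => (geom_aux k).symm
  exact Summable.of_nonneg_of_le log_bFun_nonneg log_bFun_le hg

set_option maxHeartbeats 1000000 in
lemma tail_bound : (∑' k : ℕ, Real.log (bFun (k + 5))) ≤ 1 / 324 := by
  have hgeo : HasSum (fun k : ℕ => 9 / 2 * ((3 : ℝ) ^ (k + 5 + 2))⁻¹) (1 / 324 : ℝ) := by
    have h := (hasSum_geometric_of_lt_one (by norm_num : (0:ℝ) ≤ 1/3)
      (by norm_num : (1/3 : ℝ) < 1)).mul_left (1 / 486 : ℝ)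
    have e : ∀ k : ℕ, (1 / 486 : ℝ) * (1 / 3) ^ k = 9 / 2 * ((3 : ℝ) ^ (k + 5 + 2))⁻¹ := by
      intro k
      rw [show k + 5 + 2 = k + 7 by ring, pow_add, div_pow]
      have : (0:ℝ) < 3 ^ k := by positivity
      field_simp
      ring
    have e2 : (1 / 486 : ℝ) * (1 - 1 / 3)⁻¹ = 1 / 324 := by norm_num
    rw [e2] at h
    exact h.congr_fun fun k => (e k).symm
  rw [← hgeo.tsum_eq]
  exact Summable.tsum_le_tsum (fun k => log_bFun_le (k + 5))
    ((summable_nat_add_iff 5).mpr summable_log_bFun) hgeo.summable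

-- Numeric upper bounds on the factors
lemma bFun0_le : bFun 0 ≤ 6170563 / 5000000 := by
  have h := zeta_upper 2 30 (by norm_num) (by norm_num)
  simp only [Finset.sum_range_succ, Finset.sum_range_zero] at h
  norm_num at h
  have hb : bFun 0 = (1 - ((2:ℝ) ^ 2)⁻¹) * zetaReal 2 := rfl
  have e : (1 - ((2:ℝ) ^ 2)⁻¹) = 3 / 4 := by norm_num
  rw [hb, e]
  linarith [h]

lemma bFun1_le : bFun 1 ≤ 2107253 / 2000000 := by
  have h := zeta_upper 3 15 (by norm_num) (by norm_num)
  simp only [Finset.sum_range_succ, Finset.sum_range_zero] at h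
  norm_num at h
  have hb : bFun 1 = (1 - ((2:ℝ) ^ 3)⁻¹) * zetaReal 3 := rfl
  have e : (1 - ((2:ℝ) ^ 3)⁻¹) = 7 / 8 := by norm_num
  rw [hb, e]
  linarith [h]

lemma bFun2_le : bFun 2 ≤ 10151841 / 10000000 := by
  have h := zeta_upper 4 10 (by norm_num) (by norm_num)
  simp only [Finset.sum_range_succ, Finset.sum_range_zero] at h
  norm_num at h
  have hb : bFun 2 = (1 - ((2:ℝ) ^ 4)⁻¹) * zetaReal 4 := rfl
  have e : (1 - ((2:ℝ) ^ 4)⁻¹) = 15 / 16 := by norm_num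
  rw [hb, e]
  linarith [h]

lemma bFun3_le : bFun 3 ≤ 10046441 / 10000000 := by
  have h := zeta_upper 5 8 (by norm_num) (by norm_num)
  simp only [Finset.sum_range_succ, Finset.sum_range_zero] at h
  norm_num at h
  have hb : bFun 3 = (1 - ((2:ℝ) ^ 5)⁻¹) * zetaReal 5 := rfl
  have e : (1 - ((2:ℝ) ^ 5)⁻¹) = 31 / 32 := by norm_num
  rw [hb, e]
  linarith [h]

lemma bFun4_le : bFun 4 ≤ 1001499 / 1000000 := by
  have h := zeta_upper 6 6 (by norm_num) (by norm_num)
  simp only [Finset.sum_range_succ, Finset.sum_range_zero] at h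
  norm_num at h
  have hb : bFun 4 = (1 - ((2:ℝ) ^ 6)⁻¹) * zetaReal 6 := rfl
  have e : (1 - ((2:ℝ) ^ 6)⁻¹) = 63 / 64 := by norm_num
  rw [hb, e]
  linarith [h]

-- Numeric lower bounds on the factors
lemma le_bFun0 : (3080513 / 2500000 : ℝ) ≤ bFun 0 := by
  have h := zeta2_lower 15
  simp only [Finset.sum_range_succ, Finset.sum_range_zero] at h
  norm_num at h
  have hb : bFun 0 = (1 - ((2:ℝ) ^ 2)⁻¹) * zetaReal 2 := rfl
  have e : (1 - ((2:ℝ) ^ 2)⁻¹) = 3 / 4 := by norm_num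
  rw [hb, e]
  linarith [h]

lemma le_bFun1 : (5245021 / 5000000 : ℝ) ≤ bFun 1 := by
  have h := zeta_lower 3 12 (by norm_num)
  simp only [Finset.sum_range_succ, Finset.sum_range_zero] at h
  norm_num at h
  have hb : bFun 1 = (1 - ((2:ℝ) ^ 3)⁻¹) * zetaReal 3 := rfl
  have e : (1 - ((2:ℝ) ^ 3)⁻¹) = 7 / 8 := by norm_num
  rw [hb, e]
  linarith [h]

lemma le_bFun2 : (2028631 / 2000000 : ℝ) ≤ bFun 2 := by
  have h := zeta_lower 4 9 (by norm_num)
  simp only [Finset.sum_range_succ, Finset.sum_range_zero] at h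
  norm_num at h
  have hb : bFun 2 = (1 - ((2:ℝ) ^ 4)⁻¹) * zetaReal 4 := rfl
  have e : (1 - ((2:ℝ) ^ 4)⁻¹) = 15 / 16 := by norm_num
  rw [hb, e]
  linarith [h]

lemma le_bFun3 : (10044483 / 10000000 : ℝ) ≤ bFun 3 := by
  have h := zeta_lower 5 7 (by norm_num)
  simp only [Finset.sum_range_succ, Finset.sum_range_zero] at h
  norm_num at h
  have hb : bFun 3 = (1 - ((2:ℝ) ^ 5)⁻¹) * zetaReal 5 := rfl
  have e : (1 - ((2:ℝ) ^ 5)⁻¹) = 31 / 32 := by norm_num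
  rw [hb, e]
  linarith [h]

/-- `ℙ₀ = ∏_{k≥2} ((1 - 2^{-k}) ζ(k))⁻¹` satisfies `0.75 < ℙ₀ < 0.76`. -/
theorem P0_bounds :
    0.75 < (∏' k : ℕ, ((1 - ((2 : ℝ) ^ (k + 2))⁻¹) * zetaReal (k + 2))⁻¹) ∧
    (∏' k : ℕ, ((1 - ((2 : ℝ) ^ (k + 2))⁻¹) * zetaReal (k + 2))⁻¹) < 0.76 := by
  set L := ∑' k : ℕ, Real.log (bFun k) with hLdef
  have hprod : HasProd (fun k : ℕ => (bFun k)⁻¹) (Real.exp (-L)) := by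
    have hs : HasSum (fun k : ℕ => Real.log ((bFun k)⁻¹)) (-L) := by
      simpa [Real.log_inv] using summable_log_bFun.hasSum.neg
    have h2 := hs.rexp
    have hfun : (Real.exp ∘ fun k : ℕ => Real.log ((bFun k)⁻¹))
        = fun k : ℕ => (bFun k)⁻¹ :=
      funext fun k => Real.exp_log (inv_pos.mpr (bFun_pos k))
    rwa [hfun] at h2
  have htp : (∏' k : ℕ, ((1 - ((2 : ℝ) ^ (k + 2))⁻¹) * zetaReal (k + 2))⁻¹)
      = Real.exp (-L) := hprod.tprod_eq
  -- upper bound on L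
  have hQ : (∏ k ∈ Finset.range 5, bFun k) ≤
      (6170563 / 5000000 : ℝ) * (2107253 / 2000000) * (10151841 / 10000000)
        * (10046441 / 10000000) * (1001499 / 1000000) := by
    rw [show (5 : ℕ) = 4 + 1 by rfl]
    rw [Finset.prod_range_succ, Finset.prod_range_succ, Finset.prod_range_succ,
      Finset.prod_range_succ, Finset.prod_range_one]
    have h0 := bFun0_le; have h1 := bFun1_le; have h2 := bFun2_le
    have h3 := bFun3_le; have h4 := bFun4_le
    have p0 := bFun_pos 0; have p1 := bFun_pos 1; have p2 := bFun_pos 2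
    have p3 := bFun_pos 3; have p4 := bFun_pos 4
    gcongr <;> positivity
  have hLlt : L < Real.log (4 / 3) := by
    have hsplit : L = (∑ k ∈ Finset.range 5, Real.log (bFun k))
        + ∑' k : ℕ, Real.log (bFun (k + 5)) :=
      (Summable.sum_add_tsum_nat_add 5 summable_log_bFun).symm
    have hfin : (∑ k ∈ Finset.range 5, Real.log (bFun k))
        = Real.log (∏ k ∈ Finset.range 5, bFun k) :=
      (Real.log_prod fun k _ => ne_of_gt (bFun_pos k)).symm
    set Q : ℝ := (6170563 / 5000000 : ℝ) * (2107253 / 2000000) * (10151841 / 10000000)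
        * (10046441 / 10000000) * (1001499 / 1000000) with hQdef
    have hQpos : (0 : ℝ) < Q := by rw [hQdef]; norm_num
    have hlogQ : Real.log (∏ k ∈ Finset.range 5, bFun k) ≤ Real.log Q := by
      refine Real.log_le_log ?_ hQ
      exact Finset.prod_pos fun k _ => bFun_pos k
    -- log Q ≤ log (4/3) + (3*Q/4 - 1)
    have hkey : Real.log Q ≤ Real.log (4 / 3) + (3 * Q / 4 - 1) := by
      have h1 : Real.log (Q * (3 / 4)) ≤ Q * (3 / 4) - 1 :=
        Real.log_le_sub_one_of_pos (by positivity)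
      have h2 : Real.log (Q * (3 / 4)) = Real.log Q - Real.log (4 / 3) := by
        rw [Real.log_mul (ne_of_gt hQpos) (by norm_num),
          show (3 / 4 : ℝ) = (4 / 3)⁻¹ by norm_num, Real.log_inv]
        ring
      rw [h2] at h1
      linarith
    have htail := tail_bound
    have hnum : 3 * Q / 4 - 1 + 1 / 324 < 0 := by rw [hQdef]; norm_num
    calc L = (∑ k ∈ Finset.range 5, Real.log (bFun k)) + ∑' k : ℕ, Real.log (bFun (k + 5)) :=
          hsplit
      _ ≤ Real.log Q + 1 / 324 := by rw [hfin]; exact add_le_add hlogQ htail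
      _ ≤ Real.log (4 / 3) + (3 * Q / 4 - 1) + 1 / 324 := by linarith
      _ < Real.log (4 / 3) := by linarith
  -- lower bound on L
  have hLgt : Real.log (25 / 19) < L := by
    have hfin : (∑ k ∈ Finset.range 4, Real.log (bFun k)) ≤ L :=
      Summable.sum_le_tsum _ (fun i _ => log_bFun_nonneg i) summable_log_bFun
    have hq : (25 / 19 : ℝ) < ∏ k ∈ Finset.range 4, bFun k := by
      rw [show (4 : ℕ) = 3 + 1 by rfl]
      rw [Finset.prod_range_succ, Finset.prod_range_succ, Finset.prod_range_succ,
        Finset.prod_range_one]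
      have h0 := le_bFun0; have h1 := le_bFun1; have h2 := le_bFun2; have h3 := le_bFun3
      calc (25 / 19 : ℝ)
          < (3080513 / 2500000 : ℝ) * (5245021 / 5000000) * (2028631 / 2000000)
              * (10044483 / 10000000) := by norm_num
        _ ≤ bFun 0 * bFun 1 * bFun 2 * bFun 3 := by gcongr <;> norm_num
    have hlog : Real.log (25 / 19) < Real.log (∏ k ∈ Finset.range 4, bFun k) :=
      Real.log_lt_log (by norm_num) hq
    have heq : Real.log (∏ k ∈ Finset.range 4, bFun k)
        = ∑ k ∈ Finset.range 4, Real.log (bFun k) :=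
      Real.log_prod fun k _ => ne_of_gt (bFun_pos k)
    rw [heq] at hlog
    linarith
  constructor
  · rw [htp]
    have : (0.75 : ℝ) = Real.exp (Real.log (3 / 4)) := by
      rw [Real.exp_log (by norm_num)]; norm_num
    rw [this]
    refine Real.exp_lt_exp.mpr ?_
    rw [show (3 / 4 : ℝ) = (4 / 3)⁻¹ by norm_num, Real.log_inv]
    linarith
  · rw [htp]
    have : (0.76 : ℝ) = Real.exp (Real.log (19 / 25)) := by
      rw [Real.exp_log (by norm_num)]; norm_num
    rw [this]
    refine Real.exp_lt_exp.mpr ?_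
    rw [show (19 / 25 : ℝ) = (25 / 19)⁻¹ by norm_num, Real.log_inv]
    linarith
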